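/- arXiv:2008.13618 — 2 statements merged into one kernel-verified Lean document; each statement's English description precedes it below -/
import Mathlib

section
/- Let r ≥ 2, let n_1, ..., n_r be non-negative integers with sum n ≥ 1, and let α' > 0. Then log(Γ(α')/Γ(n + α')) + Σ_{k=1}^{r} log(Γ(n_k + α'/r)/Γ(α'/r)) ≤ -log r. -/
open Finset

private lemma gamma_nat_add_aux (x : ℝ) (hx : 0 < x) (n : ℕ) :
    Real.Gamma ((n : ℝ) + x) = (∏ j ∈ Finset.range n, ((j : ℝ) + x)) * Real.Gamma x := by
  induction n with
  | zero => simp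
  | succ n ih =>
    have hne : (n : ℝ) + x ≠ 0 := by positivity
    have : ((n + 1 : ℕ) : ℝ) + x = ((n : ℝ) + x) + 1 := by push_cast; ring
    rw [this, Real.Gamma_add_one hne, ih, Finset.prod_range_succ]
    ring

private lemma key_prod_bound (r : ℕ) (hr : 1 ≤ r) (α : ℝ) (hα : 0 < α) :
    ∀ n : ℕ, ∀ m : Fin r → ℕ, ∑ k, m k = n + 1 →
      ∏ k, ∏ j ∈ Finset.range (m k), ((j : ℝ) + α) ≤
        α * ∏ t ∈ Finset.Ico 1 (n + 1), ((t : ℝ) + r * α) := by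
  intro n
  induction n with
  | zero =>
    intro m hsum
    have hle : ∀ k, m k ≤ 1 := by
      intro k
      calc m k ≤ ∑ k, m k := Finset.single_le_sum (fun _ _ => Nat.zero_le _) (Finset.mem_univ k)
        _ = 1 := hsum
    have hpow : ∀ k, ∏ j ∈ Finset.range (m k), ((j : ℝ) + α) = α ^ (m k) := by
      intro k
      rcases Nat.le_one_iff_eq_zero_or_eq_one.mp (hle k) with h | h <;> rw [h] <;> simp
    have h : ∏ k, ∏ j ∈ Finset.range (m k), ((j : ℝ) + α) = α := by
      calc ∏ k, ∏ j ∈ Finset.range (m k), ((j : ℝ) + α)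
          = ∏ k, α ^ (m k) := by simp_rw [hpow]
        _ = α ^ (∑ k, m k) := by rw [Finset.prod_pow_eq_pow_sum]
        _ = α := by rw [hsum]; simp
    rw [h, show (0:ℕ) + 1 = 1 from rfl, Finset.Ico_self, Finset.prod_empty, mul_one]
  | succ n ih =>
    intro m hsum
    have hne : ∑ k, m k ≠ 0 := by omega
    obtain ⟨k₀, -, hk₀⟩ := Finset.exists_ne_zero_of_sum_ne_zero hne
    obtain ⟨s, hs⟩ := Nat.exists_eq_succ_of_ne_zero hk₀
    set m' : Fin r → ℕ := Function.update m k₀ s with hm'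
    have hmem : k₀ ∈ (Finset.univ : Finset (Fin r)) := Finset.mem_univ _
    have hE : m k₀ + ∑ k ∈ Finset.univ.erase k₀, m k = n + 2 := by
      rw [Finset.add_sum_erase _ _ hmem, hsum]
    have hsum' : ∑ k, m' k = n + 1 := by
      rw [hm', Finset.sum_update_of_mem hmem, ← Finset.erase_eq]
      omega
    have hprod' : ∏ k, ∏ j ∈ Finset.range (m' k), ((j : ℝ) + α)
        = (∏ j ∈ Finset.range s, ((j : ℝ) + α)) *
          ∏ k ∈ Finset.univ.erase k₀, ∏ j ∈ Finset.range (m k), ((j : ℝ) + α) := by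
      rw [← Finset.mul_prod_erase _ (fun k => ∏ j ∈ Finset.range (m' k), ((j : ℝ) + α)) hmem]
      congr 1
      · rw [hm', Function.update_self]
      · apply Finset.prod_congr rfl
        intro k hk
        rw [hm', Function.update_of_ne (Finset.ne_of_mem_erase hk)]
    have hprod : ∏ k, ∏ j ∈ Finset.range (m k), ((j : ℝ) + α)
        = ((s : ℝ) + α) * ∏ k, ∏ j ∈ Finset.range (m' k), ((j : ℝ) + α) := by
      rw [hprod', ← Finset.mul_prod_erase _ _ hmem, hs, Finset.prod_range_succ]
      ring
    have hIH := ih m' hsum'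
    have hfac : (s : ℝ) + α ≤ ((n + 1 : ℕ) : ℝ) + r * α := by
      have hs_le : s ≤ n + 1 := by omega
      have : α ≤ (r : ℝ) * α := le_mul_of_one_le_left hα.le (by exact_mod_cast hr)
      push_cast
      have : (s : ℝ) ≤ (n : ℝ) + 1 := by exact_mod_cast hs_le
      nlinarith [le_mul_of_one_le_left hα.le (show (1:ℝ) ≤ r by exact_mod_cast hr)]
    have hpos1 : (0 : ℝ) ≤ ∏ k, ∏ j ∈ Finset.range (m' k), ((j : ℝ) + α) := by positivity
    have hpos2 : (0 : ℝ) ≤ (s : ℝ) + α := by positivity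
    calc ∏ k, ∏ j ∈ Finset.range (m k), ((j : ℝ) + α)
        = ((s : ℝ) + α) * ∏ k, ∏ j ∈ Finset.range (m' k), ((j : ℝ) + α) := hprod
      _ ≤ (((n + 1 : ℕ) : ℝ) + r * α) * (α * ∏ t ∈ Finset.Ico 1 (n + 1), ((t : ℝ) + r * α)) := by
          apply mul_le_mul hfac hIH hpos1 (by positivity)
      _ = α * ∏ t ∈ Finset.Ico 1 (n + 1 + 1), ((t : ℝ) + r * α) := by
          rw [Finset.prod_Ico_succ_top (by omega : 1 ≤ n + 1)]
          ring

theorem bdeu_local_bound_neg_log (r : ℕ) (hr : 2 ≤ r) (m : Fin r → ℕ)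
    (hpos : 1 ≤ ∑ k, m k) (α' : ℝ) (hα' : 0 < α') :
    Real.log (Real.Gamma α' / Real.Gamma ((∑ k, m k : ℕ) + α')) +
        ∑ k, Real.log (Real.Gamma ((m k : ℝ) + α' / r) / Real.Gamma (α' / r)) ≤
      -Real.log r := by
  have hr0 : (0 : ℝ) < r := by positivity
  set α : ℝ := α' / r with hαdef
  have hα : 0 < α := by positivity
  have hrα : (r : ℝ) * α = α' := by
    rw [hαdef]; field_simp
  set N := ∑ k, m k with hN
  obtain ⟨n, hn⟩ : ∃ n, N = n + 1 := ⟨N - 1, by omega⟩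
  -- rewrite gamma ratios as products
  have hΓα : 0 < Real.Gamma α := Real.Gamma_pos_of_pos hα
  have hΓα' : 0 < Real.Gamma α' := Real.Gamma_pos_of_pos hα'
  have hQpos : (0 : ℝ) < ∏ i ∈ Finset.range N, ((i : ℝ) + α') := by positivity
  have hA : Real.Gamma ((N : ℝ) + α') = (∏ i ∈ Finset.range N, ((i : ℝ) + α')) * Real.Gamma α' :=
    gamma_nat_add_aux α' hα' N
  have hBk : ∀ k, Real.Gamma ((m k : ℝ) + α) = (∏ j ∈ Finset.range (m k), ((j : ℝ) + α)) * Real.Gamma α :=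
    fun k => gamma_nat_add_aux α hα (m k)
  have hPk : ∀ k, Real.Gamma ((m k : ℝ) + α) / Real.Gamma α = ∏ j ∈ Finset.range (m k), ((j : ℝ) + α) := by
    intro k
    rw [hBk k]
    field_simp
  have hPkpos : ∀ k, (0:ℝ) < ∏ j ∈ Finset.range (m k), ((j : ℝ) + α) := by
    intro k; positivity
  -- combinatorial bound
  have hkey := key_prod_bound r (by omega) α hα n m (by omega)
  -- Q = α' * tail product
  have hQ : ∏ i ∈ Finset.range N, ((i : ℝ) + α')
      = α' * ∏ t ∈ Finset.Ico 1 N, ((t : ℝ) + α') := by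
    rw [Finset.range_eq_Ico, Finset.prod_eq_prod_Ico_succ_bot (by omega : 0 < N)]
    norm_num
  have htail : (0:ℝ) < ∏ t ∈ Finset.Ico 1 N, ((t : ℝ) + α') := by positivity
  have hProds : ∏ k, ∏ j ∈ Finset.range (m k), ((j : ℝ) + α)
      ≤ (∏ i ∈ Finset.range N, ((i : ℝ) + α')) / r := by
    rw [hn]
    rw [hrα] at hkey
    calc ∏ k, ∏ j ∈ Finset.range (m k), ((j : ℝ) + α)
        ≤ α * ∏ t ∈ Finset.Ico 1 (n + 1), ((t : ℝ) + α') := hkey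
      _ = (∏ i ∈ Finset.range (n+1), ((i : ℝ) + α')) / r := by
          rw [hn] at hQ; rw [hQ, hαdef]; ring
  -- assemble logs
  rw [Real.log_div hΓα'.ne' (by rw [hA]; positivity)]
  have hsumlog : ∑ k, Real.log (Real.Gamma ((m k : ℝ) + α) / Real.Gamma α)
      = Real.log (∏ k, ∏ j ∈ Finset.range (m k), ((j : ℝ) + α)) := by
    simp_rw [hPk]
    rw [Real.log_prod]
    intro k _
    exact (hPkpos k).ne'
  rw [hsumlog, hA, Real.log_mul (by positivity) hΓα'.ne']
  have hlog : Real.log (∏ k, ∏ j ∈ Finset.range (m k), ((j : ℝ) + α))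
      ≤ Real.log ((∏ i ∈ Finset.range N, ((i : ℝ) + α')) / r) :=
    Real.log_le_log (by positivity) hProds
  rw [Real.log_div hQpos.ne' hr0.ne'] at hlog
  linarith
end

section
/- Monotonicity of positive-count supports: if Π' ⊆ Π'' are parent sets and r⁺(S) denotes the number of joint instantiations of S with positive count in a fixed dataset, then r⁺(Π'') ≥ r⁺(Π'). Hence if σ(Π) + ε < r⁺(Π')·log r_i for r_i ≥ 2, then also the BDeu-score lower bound r⁺(Π'')·log r_i ≥ r⁺(Π')·log r_i > σ(Π) + ε holds for every superset Π'' ⊇ Π', so all supersets of Π' are safely pruned. -/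
/-- The number of joint instantiations of the variable set `S` that occur with positive
count in the dataset `d` of `M` instances over variables `V`. -/
noncomputable def rPlus {V : Type*} [DecidableEq V] (M : ℕ) (d : Fin M → V → ℕ)
    (S : Finset V) : ℕ :=
  (Finset.univ.image (fun m : Fin M => fun v : S => d m v)).card

theorem rplus_mono_superset_pruning {V : Type*} [DecidableEq V]
    (M : ℕ) (d : Fin M → V → ℕ)  -- a dataset of M instances over variables V
    (P' P'' : Finset V) (hsub : P' ⊆ P'')
    (ri : ℕ) (hri : 2 ≤ ri) :
    rPlus M d P' ≤ rPlus M d P'' ∧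
      ∀ σP ε : ℝ, 0 ≤ ε → σP + ε < (rPlus M d P' : ℝ) * Real.log ri →
        σP + ε < (rPlus M d P'' : ℝ) * Real.log ri := by
  have hmono : rPlus M d P' ≤ rPlus M d P'' := by
    unfold rPlus
    have h : (Finset.univ.image (fun m : Fin M => fun v : P' => d m v))
        = (Finset.univ.image (fun m : Fin M => fun v : P'' => d m v)).image
          (fun f : P'' → ℕ => fun v : P' => f ⟨v, hsub v.2⟩) := by
      rw [Finset.image_image]
      rfl
    rw [h]
    exact Finset.card_image_le
  refine ⟨hmono, fun σP ε hε h => lt_of_lt_of_le h ?_⟩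
  have hlog : 0 ≤ Real.log ri := Real.log_nonneg (by exact_mod_cast le_trans one_le_two hri)
  exact mul_le_mul_of_nonneg_right (by exact_mod_cast hmono) hlog
end
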